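/- arXiv:2307.16615 — 2 statements merged into one kernel-verified Lean document; each statement's English description precedes it below -/
import Mathlib

section
/- Alikhanov's fractional chain inequality (scalar version): Let α ∈ (0,1) and let u ∈ C¹([0,T];ℝ). Then for all t ∈ (0,T], the Caputo derivative ∂_t^α u(t) = (g_{1-α} * u')(t) satisfies u(t) · ∂_t^α u(t) ≥ (1/2) ∂_t^α (u²)(t). -/
open MeasureTheory Set Filter Topology

/-- Riemann–Liouville kernel `g_α(t) = t^(α-1)/Γ(α)`. -/
noncomputable def rlK (α t : ℝ) : ℝ := t ^ (α - 1) / Real.Gamma α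

/-- Alikhanov's fractional chain inequality (scalar version): for `u ∈ C¹([0,T])` and
`α ∈ (0,1)`, `u(t) · ∂ₜ^α u(t) ≥ (1/2) ∂ₜ^α (u²)(t)` for all `t ∈ (0,T]`, where
`∂ₜ^α u = g_{1-α} * u'` is the Caputo derivative. -/
theorem alikhanov_scalar (α T : ℝ) (hα : α ∈ Set.Ioo (0:ℝ) 1) (hT : 0 < T)
    (u u' : ℝ → ℝ) (hu : ∀ t ∈ Set.Icc (0:ℝ) T, HasDerivAt u (u' t) t)
    (hu' : ContinuousOn u' (Set.Icc 0 T)) :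
    ∀ t ∈ Set.Ioc (0:ℝ) T,
      u t * (∫ s in (0:ℝ)..t, rlK (1 - α) (t - s) * u' s) ≥
        (1 / 2) * ∫ s in (0:ℝ)..t, rlK (1 - α) (t - s) * (2 * u s * u' s) := by
  obtain ⟨hα0, hα1⟩ := hα
  intro t ht
  obtain ⟨ht0, htT⟩ := ht
  have hΓ : 0 < Real.Gamma (1 - α) := Real.Gamma_pos_of_pos (by linarith)
  set Γ := Real.Gamma (1 - α) with hΓdef
  have hrl : ∀ s : ℝ, rlK (1 - α) (t - s) = (t - s) ^ (-α) / Γ := by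
    intro s
    have h1 : (1 : ℝ) - α - 1 = -α := by ring
    rw [rlK, h1, hΓdef]
  set k : ℝ → ℝ := fun s => (t - s) ^ (-α) / Γ with hkdef
  set k' : ℝ → ℝ := fun s => α * (t - s) ^ (-α - 1) / Γ with hk'def
  set v : ℝ → ℝ := fun s => (u t - u s) ^ 2 / 2 with hvdef
  set g : ℝ → ℝ := fun s => (u t - u s) * u' s with hgdef
  have hsub : Icc (0:ℝ) t ⊆ Icc 0 T := Icc_subset_Icc le_rfl htT
  have huIcc : uIcc (0:ℝ) t = Icc 0 t := uIcc_of_le ht0.le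
  -- continuity of u on [0,T]
  have hu_cont : ContinuousOn u (Icc 0 T) := fun s hs =>
    (hu s hs).continuousAt.continuousWithinAt
  -- interval integrability of k on [0,t]
  have hk_int : IntervalIntegrable k volume 0 t := by
    have h1 := (intervalIntegral.intervalIntegrable_rpow'
      (show (-1:ℝ) < -α by linarith) (a := (0:ℝ)) (b := t)).comp_sub_left t
    have h2 : IntervalIntegrable (fun s => (t - s) ^ (-α)) volume 0 t := by
      simpa using h1.symm
    exact h2.div_const Γ
  -- g is continuous on [0,t]
  have hg_cont : ContinuousOn g (Icc 0 t) :=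
    (continuousOn_const.sub (hu_cont.mono hsub)).mul (hu'.mono hsub)
  -- integrability of the main integrands
  have hint1 : IntervalIntegrable (fun s => k s * u' s) volume 0 t :=
    hk_int.mul_continuousOn (huIcc ▸ hu'.mono hsub)
  have hint2 : IntervalIntegrable (fun s => k s * (u s * u' s)) volume 0 t :=
    hk_int.mul_continuousOn (huIcc ▸ (hu_cont.mono hsub).mul (hu'.mono hsub))
  have hint3 : IntervalIntegrable (fun s => k s * g s) volume 0 t :=
    hk_int.mul_continuousOn (huIcc ▸ hg_cont)
  -- nonnegativity of k and v
  have hk_nonneg : ∀ s : ℝ, s ≤ t → 0 ≤ k s := by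
    intro s hs
    have h1 : (0:ℝ) ≤ (t - s) ^ (-α) := Real.rpow_nonneg (by linarith) _
    positivity
  have hv_nonneg : ∀ s : ℝ, 0 ≤ v s := fun s => by positivity
  -- the key inequality
  have key : 0 ≤ ∫ s in (0:ℝ)..t, k s * g s := by
    -- bound on u'
    obtain ⟨M, hM⟩ := (isCompact_Icc (a := (0:ℝ)) (b := T)).exists_bound_of_continuousOn hu'
    have hM0 : 0 ≤ M := le_trans (norm_nonneg _) (hM 0 ⟨le_rfl, hT.le⟩)
    set C : ℝ := M ^ 2 / (2 * Γ) with hCdef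
    -- Lipschitz bound on u
    have hlip : ∀ x ∈ Icc (0:ℝ) T, |u t - u x| ≤ M * |t - x| := by
      intro x hx
      have := (convex_Icc (0:ℝ) T).norm_image_sub_le_of_norm_hasDerivWithin_le
        (f := u) (f' := u') (fun s hs => (hu s hs).hasDerivWithinAt)
        (fun s hs => hM s hs) hx ⟨ht0.le, htT⟩
      simpa [Real.norm_eq_abs] using this
    -- derivative of v
    have hv_deriv : ∀ s ∈ Icc (0:ℝ) T, HasDerivAt v (-g s) s := by
      intro s hs
      have h1 : HasDerivAt (fun s => u t - u s) (-u' s) s := by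
        simpa using (hu s hs).const_sub (u t)
      have h2 := (h1.pow 2).div_const 2
      refine h2.congr_deriv ?_
      simp only [hgdef]
      ring
    -- derivative of k
    have hk_deriv : ∀ s : ℝ, s < t → HasDerivAt k (k' s) s := by
      intro s hs
      have hts : (0:ℝ) < t - s := by linarith
      have h1 : HasDerivAt (fun s : ℝ => t - s) (-1) s := by
        simpa using (hasDerivAt_id s).const_sub t
      have h2 := (h1.rpow_const (p := -α) (Or.inl hts.ne')).div_const Γ
      refine h2.congr_deriv ?_
      simp only [hk'def]
      ring
    -- primitive
    set F : ℝ → ℝ := fun x => ∫ s in (0:ℝ)..x, k s * g s with hFdef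
    have hFcont : ContinuousOn F (Icc 0 t) := by
      have := intervalIntegral.continuousOn_primitive_interval' hint3
        (a := 0) (by rw [huIcc]; exact ⟨le_rfl, ht0.le⟩)
      rwa [huIcc] at this
    -- integration by parts lower bound on [0, x], x < t
    have hIBP : ∀ x ∈ Ioo (0:ℝ) t, k 0 * v 0 - C * (t - x) ^ ((2:ℝ) - α) ≤ F x := by
      intro x hx
      have hxIcc : Icc (0:ℝ) x ⊆ Icc 0 t := Icc_subset_Icc le_rfl hx.2.le
      have huIccx : uIcc (0:ℝ) x = Icc 0 x := uIcc_of_le hx.1.le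
      have htx : (0:ℝ) < t - x := by linarith [hx.2]
      have hk'_cont : ContinuousOn k' (Icc 0 x) := by
        apply ContinuousOn.div_const
        apply continuousOn_const.mul
        apply ContinuousOn.rpow_const (continuousOn_const.sub continuousOn_id)
        intro s hs
        left
        have : s ≤ x := hs.2
        have : (0:ℝ) < t - s := by linarith
        exact this.ne'
      have hk'_int : IntervalIntegrable k' volume 0 x :=
        (huIccx ▸ hk'_cont).intervalIntegrable
      have hg'_int : IntervalIntegrable (fun s => -g s) volume 0 x :=
        (huIccx ▸ ((hg_cont.mono hxIcc).neg)).intervalIntegrable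
      have hparts := intervalIntegral.integral_mul_deriv_eq_deriv_mul
        (a := (0:ℝ)) (b := x) (u := k) (v := v) (u' := k') (v' := fun s => -g s)
        (fun s hs => hk_deriv s (lt_of_le_of_lt (huIccx ▸ hs).2 hx.2))
        (fun s hs => hv_deriv s (hsub (hxIcc (huIccx ▸ hs))))
        hk'_int hg'_int
      -- hparts : ∫ k * (-g) = k x * v x - k 0 * v 0 - ∫ k' * v
      have hFx : F x = k 0 * v 0 - k x * v x + ∫ s in (0:ℝ)..x, k' s * v s := by
        have hneg : (∫ s in (0:ℝ)..x, k s * (fun s => -g s) s)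
            = -∫ s in (0:ℝ)..x, k s * g s := by
          rw [← intervalIntegral.integral_neg]
          congr 1; ext s; ring
        rw [hneg] at hparts
        rw [hFdef]
        linarith [hparts]
      have hnn : 0 ≤ ∫ s in (0:ℝ)..x, k' s * v s := by
        apply intervalIntegral.integral_nonneg hx.1.le
        intro s hs
        have hts : (0:ℝ) < t - s := by linarith [hs.2, hx.2]
        have h1 : (0:ℝ) ≤ k' s := by
          have : (0:ℝ) ≤ (t - s) ^ (-α - 1) := Real.rpow_nonneg hts.le _
          positivity
        exact mul_nonneg h1 (hv_nonneg s)
      -- bound the boundary term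
      have hbd : k x * v x ≤ C * (t - x) ^ ((2:ℝ) - α) := by
        have h2 : (u t - u x) ^ 2 ≤ M ^ 2 * (t - x) ^ 2 := by
          have h3 := hlip x (hsub ⟨hx.1.le, hx.2.le⟩)
          have h4 : |t - x| = t - x := abs_of_pos htx
          rw [h4] at h3
          nlinarith [abs_nonneg (u t - u x), sq_abs (u t - u x)]
        have hrw : (t - x) ^ (-α) * (t - x) ^ (2:ℕ) = (t - x) ^ ((2:ℝ) - α) := by
          rw [← Real.rpow_natCast (t - x) 2, ← Real.rpow_add htx]
          norm_num
          ring_nf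
        have h5 : (0:ℝ) ≤ (t - x) ^ (-α) := Real.rpow_nonneg htx.le _
        calc k x * v x = ((t - x) ^ (-α) * (u t - u x) ^ 2) / (2 * Γ) := by
              rw [hkdef, hvdef]; ring
          _ ≤ ((t - x) ^ (-α) * (M ^ 2 * (t - x) ^ 2)) / (2 * Γ) := by
              gcongr
          _ = C * (t - x) ^ ((2:ℝ) - α) := by
              rw [hCdef, ← hrw]; ring
      linarith [hFx, hnn, hbd]
    -- take the limit x → t⁻
    have hne : (𝓝[Ioo (0:ℝ) t] t).NeBot := by
      apply mem_closure_iff_nhdsWithin_neBot.mp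
      rw [closure_Ioo ht0.ne]
      exact ⟨ht0.le, le_rfl⟩
    have hFt : Tendsto F (𝓝[Ioo (0:ℝ) t] t) (𝓝 (F t)) :=
      (hFcont t ⟨ht0.le, le_rfl⟩).mono_left (nhdsWithin_mono _ Ioo_subset_Icc_self)
    have hlim2 : Tendsto (fun x => k 0 * v 0 - C * (t - x) ^ ((2:ℝ) - α))
        (𝓝[Ioo (0:ℝ) t] t) (𝓝 (k 0 * v 0)) := by
      have h1 : Tendsto (fun x : ℝ => (t - x) ^ ((2:ℝ) - α)) (𝓝 t) (𝓝 0) := by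
        have hc : ContinuousAt (fun x : ℝ => (t - x) ^ ((2:ℝ) - α)) t := by
          apply ContinuousAt.rpow_const
          · exact (continuous_const.sub continuous_id).continuousAt
          · right; linarith
        have h0 : ((t - t : ℝ)) ^ ((2:ℝ) - α) = 0 := by
          rw [sub_self, Real.zero_rpow (by linarith : (2:ℝ) - α ≠ 0)]
        simpa only [h0] using hc.tendsto
      have h2 := (tendsto_const_nhds (x := k 0 * v 0)).sub (h1.const_mul C)
      simpa using h2.mono_left nhdsWithin_le_nhds
    have hfinal : k 0 * v 0 ≤ F t := by
      apply le_of_tendsto_of_tendsto hlim2 hFt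
      filter_upwards [self_mem_nhdsWithin] with x hx using hIBP x hx
    have h0 : 0 ≤ k 0 * v 0 := mul_nonneg (hk_nonneg 0 ht0.le) (hv_nonneg 0)
    exact le_trans h0 hfinal
  -- conclude from key
  have e2 : u t * (∫ s in (0:ℝ)..t, k s * u' s)
      = ∫ s in (0:ℝ)..t, u t * (k s * u' s) :=
    (intervalIntegral.integral_const_mul _ _).symm
  have e1 : (1 / 2 : ℝ) * (∫ s in (0:ℝ)..t, k s * (2 * u s * u' s))
      = ∫ s in (0:ℝ)..t, k s * (u s * u' s) := by
    rw [← intervalIntegral.integral_const_mul]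
    congr 1; ext s; ring
  have e3 : (∫ s in (0:ℝ)..t, k s * g s)
      = (∫ s in (0:ℝ)..t, u t * (k s * u' s))
        - ∫ s in (0:ℝ)..t, k s * (u s * u' s) := by
    rw [← intervalIntegral.integral_sub (hint1.const_mul (u t)) hint2]
    congr 1; ext s; simp [hgdef]; ring
  simp only [hrl]
  rw [ge_iff_le, e1, e2]
  rw [e3] at key
  linarith
end

section
/- Alikhanov's inequality in a Hilbert space: Let H be a real Hilbert space, α ∈ (0,1), and u ∈ C¹([0,T];H). Then for all t ∈ (0,T], ⟨∂_t^α u(t), u(t)⟩_H ≥ (1/2) ∂_t^α ‖u‖_H² (t), where ∂_t^α v = g_{1-α} * v'. -/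
open MeasureTheory Set intervalIntegral
open scoped RealInnerProductSpace

private lemma kernel_intble {α t : ℝ} (hα1 : α < 1) (a : ℝ) :
    IntervalIntegrable (fun s : ℝ => (t - s) ^ (-α)) MeasureTheory.volume a t := by
  have h : IntervalIntegrable (fun x : ℝ => x ^ (-α)) MeasureTheory.volume (t - a) (t - t) :=
    intervalIntegrable_rpow' (by linarith)
  simpa using h.comp_sub_left t

private lemma alikhanov_key {H : Type*} [NormedAddCommGroup H] [InnerProductSpace ℝ H]
    {α t : ℝ} (hα0 : 0 < α) (hα1 : α < 1) (ht : 0 < t)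
    (u u' : ℝ → H) (hu : ∀ s ∈ Set.Icc (0:ℝ) t, HasDerivAt u (u' s) s)
    (hu' : ContinuousOn u' (Set.Icc 0 t)) :
    0 ≤ ∫ s in (0:ℝ)..t, (t - s) ^ (-α) * ⟪u' s, u t - u s⟫ := by
  have hucont : ContinuousOn u (Set.Icc 0 t) :=
    fun s hs => (hu s hs).continuousAt.continuousWithinAt
  obtain ⟨M, hM⟩ := isCompact_Icc.exists_bound_of_continuousOn hu'
  have hM0 : 0 ≤ M := le_trans (norm_nonneg _) (hM 0 ⟨le_rfl, ht.le⟩)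
  -- Lipschitz-type bound
  have hLip : ∀ s ∈ Set.Icc (0:ℝ) t, ‖u t - u s‖ ≤ M * (t - s) := by
    intro s hs
    have h := (convex_Icc (0:ℝ) t).norm_image_sub_le_of_norm_hasDerivWithin_le
      (fun x hx => (hu x hx).hasDerivWithinAt) hM hs ⟨ht.le, le_rfl⟩
    calc ‖u t - u s‖ ≤ M * ‖t - s‖ := h
      _ = M * (t - s) := by rw [Real.norm_eq_abs, abs_of_nonneg (by linarith [hs.2])]
  set g : ℝ → ℝ := fun s => ⟪u' s, u t - u s⟫ with hg_def
  have hgcont : ContinuousOn g (Set.Icc 0 t) :=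
    hu'.inner (continuousOn_const.sub hucont)
  have hgb : ∀ s ∈ Set.Icc (0:ℝ) t, |g s| ≤ M * (M * (t - s)) := by
    intro s hs
    calc |g s| ≤ ‖u' s‖ * ‖u t - u s‖ := abs_real_inner_le_norm _ _
      _ ≤ M * (M * (t - s)) :=
        mul_le_mul (hM s hs) (hLip s hs) (norm_nonneg _) hM0
  have hK : IntervalIntegrable (fun s : ℝ => (t - s) ^ (-α)) volume 0 t :=
    kernel_intble hα1 0
  have hKg : IntervalIntegrable (fun s : ℝ => (t - s) ^ (-α) * g s) volume 0 t :=
    hK.mul_continuousOn (by rwa [Set.uIcc_of_le ht.le])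
  set D := ∫ s in (0:ℝ)..t, (t - s) ^ (-α) * g s with hD_def
  -- main epsilon estimate
  have hmain : ∀ ε ∈ Set.Ioo (0:ℝ) t, -(2 * M ^ 2 * ε ^ (2 - α)) ≤ D := by
    intro ε hε
    obtain ⟨hε0, hεt⟩ := hε
    set b := t - ε with hb_def
    have hb0 : 0 < b := by simp only [hb_def]; linarith
    have hbt : b < t := by simp only [hb_def]; linarith
    have hsub1 : IntervalIntegrable (fun s : ℝ => (t - s) ^ (-α) * g s) volume 0 b :=
      hKg.mono_set (by rw [Set.uIcc_of_le hb0.le, Set.uIcc_of_le ht.le]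
                       exact Set.Icc_subset_Icc le_rfl hbt.le)
    have hsub2 : IntervalIntegrable (fun s : ℝ => (t - s) ^ (-α) * g s) volume b t :=
      hKg.mono_set (by rw [Set.uIcc_of_le hbt.le, Set.uIcc_of_le ht.le]
                       exact Set.Icc_subset_Icc hb0.le le_rfl)
    have hsplit : D = (∫ s in (0:ℝ)..b, (t - s) ^ (-α) * g s)
        + ∫ s in b..t, (t - s) ^ (-α) * g s :=
      (integral_add_adjacent_intervals hsub1 hsub2).symm
    -- tail bound on [b, t]
    have htail : -(M ^ 2 * (ε ^ (2 - α) / (2 - α))) ≤ ∫ s in b..t, (t - s) ^ (-α) * g s := by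
      have hint1 : IntervalIntegrable (fun s : ℝ => -(M ^ 2 * (t - s) ^ (1 - α))) volume b t := by
        have h : IntervalIntegrable (fun s : ℝ => (t - s) ^ (-(α - 1))) volume b t :=
          kernel_intble (by linarith) b
        have h' : IntervalIntegrable (fun s : ℝ => (t - s) ^ (1 - α)) volume b t := by
          simpa [neg_sub] using h
        exact (h'.const_mul (M ^ 2)).neg
      have hpt : ∀ s ∈ Set.Icc b t, -(M ^ 2 * (t - s) ^ (1 - α)) ≤ (t - s) ^ (-α) * g s := by
        intro s hs
        rcases eq_or_lt_of_le hs.2 with heq | hlt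
        · subst heq
          simp [Real.zero_rpow (by linarith : -α ≠ 0),
            Real.zero_rpow (by linarith : (1:ℝ) - α ≠ 0)]
        · have hts : (0:ℝ) < t - s := by linarith
          have hs' : s ∈ Set.Icc (0:ℝ) t := ⟨le_trans hb0.le hs.1, hs.2⟩
          have h1 : |(t - s) ^ (-α) * g s| ≤ M ^ 2 * (t - s) ^ (1 - α) := by
            rw [abs_mul, abs_of_nonneg (Real.rpow_nonneg hts.le _)]
            calc (t - s) ^ (-α) * |g s| ≤ (t - s) ^ (-α) * (M * (M * (t - s))) :=
                  mul_le_mul_of_nonneg_left (hgb s hs') (Real.rpow_nonneg hts.le _)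
              _ = M ^ 2 * ((t - s) ^ (-α) * (t - s)) := by ring
              _ = M ^ 2 * (t - s) ^ (1 - α) := by
                  rw [show (1:ℝ) - α = -α + 1 by ring, Real.rpow_add_one hts.ne']
          linarith [neg_abs_le ((t - s) ^ (-α) * g s)]
      have hmono := integral_mono_on hbt.le hint1 hsub2 hpt
      have hval : (∫ s in b..t, -(M ^ 2 * (t - s) ^ (1 - α)))
          = -(M ^ 2 * (ε ^ (2 - α) / (2 - α))) := by
        have h1 : (∫ s in b..t, (t - s) ^ (1 - α)) = ε ^ (2 - α) / (2 - α) := by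
          have h2 := intervalIntegral.integral_comp_sub_left (a := b) (b := t)
            (fun x : ℝ => x ^ ((1:ℝ) - α)) t
          rw [h2]
          have : t - b = ε := by simp [hb_def]
          rw [sub_self, this]
          rw [integral_rpow (Or.inl (by linarith))]
          rw [Real.zero_rpow (by linarith : (1:ℝ) - α + 1 ≠ 0)]
          norm_num
          rw [show (1:ℝ) - α + 1 = 2 - α by ring]
        rw [intervalIntegral.integral_neg, intervalIntegral.integral_const_mul, h1]
      linarith [hmono, hval ▸ hmono]
    -- main bound on [0, b] via integration by parts
    have hmainpart : -(M ^ 2 * ε ^ (2 - α)) ≤ ∫ s in (0:ℝ)..b, (t - s) ^ (-α) * g s := by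
      set V : ℝ → ℝ := fun s => ⟪u t - u s, u t - u s⟫ with hV_def
      have hV : ∀ x ∈ Set.uIcc (0:ℝ) b, HasDerivAt V (-2 * g x) x := by
        intro x hx
        rw [Set.uIcc_of_le hb0.le] at hx
        have hx' : x ∈ Set.Icc (0:ℝ) t := ⟨hx.1, le_trans hx.2 hbt.le⟩
        have hw : HasDerivAt (fun s => u t - u s) (-(u' x)) x := (hu x hx').const_sub (u t)
        have h := hw.inner ℝ hw
        refine h.congr_deriv ?_
        simp only [hg_def, inner_neg_left, inner_neg_right, real_inner_comm (u' x)]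
        ring
      have hU : ∀ x ∈ Set.uIcc (0:ℝ) b,
          HasDerivAt (fun s : ℝ => (t - s) ^ (-α)) (α * (t - x) ^ (-α - 1)) x := by
        intro x hx
        rw [Set.uIcc_of_le hb0.le] at hx
        have hx' : (0:ℝ) < t - x := by linarith [hx.2]
        have h := Real.hasDerivAt_rpow_const (x := t - x) (p := -α) (Or.inl hx'.ne')
        have hc : HasDerivAt (fun s : ℝ => t - s) (-1) x := by
          simpa using (hasDerivAt_id x).const_sub t
        have := h.comp x hc
        refine this.congr_deriv ?_
        ring
      have hU'cont : ContinuousOn (fun x : ℝ => α * (t - x) ^ (-α - 1)) (Set.uIcc 0 b) := by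
        rw [Set.uIcc_of_le hb0.le]
        refine continuousOn_const.mul (ContinuousOn.rpow_const
          (continuousOn_const.sub continuousOn_id) ?_)
        intro x hx
        exact Or.inl (by intro h; nlinarith [hx.2, sub_eq_zero.mp h])
      have hU'int : IntervalIntegrable (fun x : ℝ => α * (t - x) ^ (-α - 1)) volume 0 b :=
        hU'cont.intervalIntegrable
      have hgcont' : ContinuousOn g (Set.uIcc 0 b) := by
        rw [Set.uIcc_of_le hb0.le]
        exact hgcont.mono (Set.Icc_subset_Icc le_rfl hbt.le)
      have hV'int : IntervalIntegrable (fun x : ℝ => -2 * g x) volume 0 b :=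
        (continuousOn_const.mul hgcont').intervalIntegrable
      have hIBP := intervalIntegral.integral_mul_deriv_eq_deriv_mul hU hV hU'int hV'int
      -- rewrite the integral we care about
      have hrw : (∫ s in (0:ℝ)..b, (t - s) ^ (-α) * g s)
          = -(1/2) * ∫ s in (0:ℝ)..b, (t - s) ^ (-α) * (-2 * g s) := by
        rw [← intervalIntegral.integral_const_mul]
        apply intervalIntegral.integral_congr
        intro x _
        ring
      have hVb : V b ≤ (M * ε) ^ 2 := by
        have h1 : ‖u t - u b‖ ≤ M * ε := by
          have := hLip b ⟨hb0.le, hbt.le⟩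
          simpa [hb_def] using this
        calc V b = ‖u t - u b‖ ^ 2 := real_inner_self_eq_norm_sq _
          _ ≤ (M * ε) ^ 2 := by nlinarith [norm_nonneg (u t - u b)]
      have hV0 : 0 ≤ (t - 0) ^ (-α) * V 0 :=
        mul_nonneg (Real.rpow_nonneg (by linarith) _) real_inner_self_nonneg
      have hU'V : 0 ≤ ∫ x in (0:ℝ)..b, (α * (t - x) ^ (-α - 1)) * V x := by
        apply intervalIntegral.integral_nonneg hb0.le
        intro x hx
        exact mul_nonneg (mul_nonneg hα0.le (Real.rpow_nonneg (by linarith [hx.2]) _))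
          real_inner_self_nonneg
      have hUb : (t - b) ^ (-α) * V b ≤ M ^ 2 * ε ^ (2 - α) := by
        have htb : t - b = ε := by simp [hb_def]
        rw [htb]
        calc ε ^ (-α) * V b ≤ ε ^ (-α) * (M * ε) ^ 2 :=
              mul_le_mul_of_nonneg_left hVb (Real.rpow_nonneg hε0.le _)
          _ = M ^ 2 * (ε ^ (-α) * ε ^ (2:ℝ)) := by
              rw [show ((2:ℝ)) = ((2:ℕ):ℝ) by norm_num, Real.rpow_natCast]
              ring
          _ = M ^ 2 * ε ^ (2 - α) := by
              rw [← Real.rpow_add hε0]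
              ring_nf
      rw [hrw, hIBP]
      have : (t - b) ^ (-α) * V b - (t - 0) ^ (-α) * V 0
          - (∫ x in (0:ℝ)..b, (α * (t - x) ^ (-α - 1)) * V x) ≤ M ^ 2 * ε ^ (2 - α) := by
        linarith
      nlinarith [this, Real.rpow_nonneg hε0.le (2 - α), sq_nonneg M,
        mul_nonneg (sq_nonneg M) (Real.rpow_nonneg hε0.le (2 - α))]
    have h2α : (1:ℝ) ≤ 2 - α := by linarith
    have hεpow : 0 ≤ ε ^ (2 - α) := Real.rpow_nonneg hε0.le _
    have hfrac : ε ^ (2 - α) / (2 - α) ≤ ε ^ (2 - α) := by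
      rw [div_le_iff₀ (by linarith)]
      nlinarith
    rw [hsplit]
    have := htail
    nlinarith
  -- take the limit ε → 0⁺
  have htend : Filter.Tendsto (fun ε : ℝ => -(2 * M ^ 2 * ε ^ (2 - α)))
      (nhdsWithin 0 (Set.Ioi 0)) (nhds 0) := by
    have h1 : Filter.Tendsto (fun ε : ℝ => ε ^ (2 - α)) (nhds 0) (nhds ((0:ℝ) ^ (2 - α))) :=
      (Real.continuousAt_rpow_const 0 (2 - α) (Or.inr (by linarith))).tendsto
    rw [Real.zero_rpow (by linarith : (2:ℝ) - α ≠ 0)] at h1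
    have h2 := (h1.const_mul (2 * M ^ 2)).neg
    simpa using h2.mono_left nhdsWithin_le_nhds
  refine le_of_tendsto htend ?_
  exact Filter.eventually_of_mem (Ioo_mem_nhdsGT_of_mem ⟨le_rfl, ht⟩) hmain

/-- Alikhanov's inequality in a real Hilbert space `H`: for `α ∈ (0,1)` and
`u ∈ C¹([0,T];H)`, `⟪∂ₜ^α u(t), u(t)⟫ ≥ (1/2) ∂ₜ^α ‖u‖²(t)` for all `t ∈ (0,T]`,
where `∂ₜ^α v = g_{1-α} * v'` and `(d/ds)‖u(s)‖² = 2⟨u'(s), u(s)⟩`. -/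
theorem alikhanov_hilbert {H : Type*} [NormedAddCommGroup H] [InnerProductSpace ℝ H]
    [CompleteSpace H] (α T : ℝ) (hα : α ∈ Set.Ioo (0:ℝ) 1) (hT : 0 < T)
    (u u' : ℝ → H) (hu : ∀ t ∈ Set.Icc (0:ℝ) T, HasDerivAt u (u' t) t)
    (hu' : ContinuousOn u' (Set.Icc 0 T)) :
    ∀ t ∈ Set.Ioc (0:ℝ) T,
      ⟪∫ s in (0:ℝ)..t, rlK (1 - α) (t - s) • u' s, u t⟫ ≥
        (1 / 2) * ∫ s in (0:ℝ)..t, rlK (1 - α) (t - s) * (2 * ⟪u' s, u s⟫) := by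
  obtain ⟨hα0, hα1⟩ := hα
  intro t ht
  obtain ⟨ht0, htT⟩ := ht
  have hsub : Set.Icc (0:ℝ) t ⊆ Set.Icc 0 T := Set.Icc_subset_Icc le_rfl htT
  have hu₁ : ∀ s ∈ Set.Icc (0:ℝ) t, HasDerivAt u (u' s) s := fun s hs => hu s (hsub hs)
  have hu'₁ : ContinuousOn u' (Set.Icc 0 t) := hu'.mono hsub
  have hucont : ContinuousOn u (Set.Icc 0 t) :=
    fun s hs => (hu₁ s hs).continuousAt.continuousWithinAt
  have hΓ : 0 < Real.Gamma (1 - α) := Real.Gamma_pos_of_pos (by linarith)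
  have hrl : ∀ τ : ℝ, rlK (1 - α) τ = τ ^ (-α) * (Real.Gamma (1 - α))⁻¹ := by
    intro τ
    rw [rlK, show (1:ℝ) - α - 1 = -α by ring, div_eq_mul_inv]
  -- integrability facts
  have hK0 : IntervalIntegrable (fun s : ℝ => (t - s) ^ (-α)) volume 0 t :=
    kernel_intble hα1 0
  have hKrl : IntervalIntegrable (fun s : ℝ => rlK (1 - α) (t - s)) volume 0 t := by
    have h := hK0.mul_const (Real.Gamma (1 - α))⁻¹
    apply h.congr
    intro s _
    beta_reduce
    rw [hrl]
  have hsmul : IntervalIntegrable (fun s : ℝ => rlK (1 - α) (t - s) • u' s) volume 0 t := by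
    have h1 : IntegrableOn (fun s : ℝ => (t - s) ^ (-α)) (Set.Icc 0 t) volume :=
      (intervalIntegrable_iff_integrableOn_Icc_of_le ht0.le).mp hK0
    have h2 : IntegrableOn (fun s : ℝ => ((t - s) ^ (-α)) • u' s) (Set.Icc 0 t) volume :=
      h1.smul_continuousOn hu'₁ isCompact_Icc
    have h3 : IntervalIntegrable (fun s : ℝ => ((t - s) ^ (-α)) • u' s) volume 0 t :=
      (intervalIntegrable_iff_integrableOn_Icc_of_le ht0.le).mpr h2
    have h4 := h3.smul (Real.Gamma (1 - α))⁻¹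
    apply h4.congr
    intro s _
    simp only [Pi.smul_apply, hrl, mul_smul]
    rw [smul_comm]
  have hip1cont : ContinuousOn (fun s : ℝ => ⟪u' s, u t⟫) (Set.Icc 0 t) :=
    hu'₁.inner continuousOn_const
  have hip2cont : ContinuousOn (fun s : ℝ => ⟪u' s, u s⟫) (Set.Icc 0 t) :=
    hu'₁.inner hucont
  have hInt1 : IntervalIntegrable (fun s : ℝ => rlK (1 - α) (t - s) * ⟪u' s, u t⟫) volume 0 t :=
    hKrl.mul_continuousOn (by rwa [Set.uIcc_of_le ht0.le])
  have hInt2 : IntervalIntegrable (fun s : ℝ => rlK (1 - α) (t - s) * ⟪u' s, u s⟫) volume 0 t :=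
    hKrl.mul_continuousOn (by rwa [Set.uIcc_of_le ht0.le])
  -- rewrite LHS
  have hLHS : ⟪∫ s in (0:ℝ)..t, rlK (1 - α) (t - s) • u' s, u t⟫
      = ∫ s in (0:ℝ)..t, rlK (1 - α) (t - s) * ⟪u' s, u t⟫ := by
    have h0 : ∀ w : H, (innerSL ℝ (u t)) w = ⟪u t, w⟫ := fun w => rfl
    rw [real_inner_comm, ← h0,
      ← ContinuousLinearMap.intervalIntegral_comp_comm (innerSL ℝ (u t)) hsmul]
    apply intervalIntegral.integral_congr
    intro s _
    simp only [h0, real_inner_smul_right]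
    rw [real_inner_comm]
  -- rewrite RHS
  have hRHS : (1 / 2) * (∫ s in (0:ℝ)..t, rlK (1 - α) (t - s) * (2 * ⟪u' s, u s⟫))
      = ∫ s in (0:ℝ)..t, rlK (1 - α) (t - s) * ⟪u' s, u s⟫ := by
    have h1 : (∫ s in (0:ℝ)..t, rlK (1 - α) (t - s) * (2 * ⟪u' s, u s⟫))
        = ∫ s in (0:ℝ)..t, 2 * (rlK (1 - α) (t - s) * ⟪u' s, u s⟫) := by
      apply intervalIntegral.integral_congr
      intro s _
      ring
    rw [h1, intervalIntegral.integral_const_mul]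
    ring
  rw [ge_iff_le, hRHS, hLHS, ← sub_nonneg, ← intervalIntegral.integral_sub hInt1 hInt2]
  have hkey := alikhanov_key hα0 hα1 ht0 u u' hu₁ hu'₁
  have hfinal : (∫ s in (0:ℝ)..t, (rlK (1 - α) (t - s) * ⟪u' s, u t⟫
      - rlK (1 - α) (t - s) * ⟪u' s, u s⟫))
      = (Real.Gamma (1 - α))⁻¹ * ∫ s in (0:ℝ)..t, (t - s) ^ (-α) * ⟪u' s, u t - u s⟫ := by
    rw [← intervalIntegral.integral_const_mul]
    apply intervalIntegral.integral_congr
    intro s _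
    simp only [hrl, inner_sub_right]
    ring
  rw [hfinal]
  exact mul_nonneg (inv_nonneg.mpr hΓ.le) hkey
end
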